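/- Fix an integer ℓ ≥ 0 and an integer N ≥ 2^{ℓ+1}. Then for every nonzero integer j, one has E(j; N) ≤ 2^{ℓ+8}. -/

import Mathlib

open MeasureTheory

/-- `e t = exp(2πit)`. -/
noncomputable def e (t : ℝ) : ℂ := Complex.exp (2 * Real.pi * Complex.I * t)

/-- For `0 < α ≤ 1`, `K α` is the unique positive integer with `(K α - 1) α < 1 ≤ K α · α`. -/
noncomputable def K (α : ℝ) : ℕ := ⌈1 / α⌉₊

/-- `E(j; N) = ∫_{2^ℓ/N}^{2^(ℓ+1)/N} |∑_{k=0}^{K(α)-1} e^(2πijkα)|² dα`. -/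
noncomputable def E (ℓ N : ℕ) (j : ℤ) : ℝ :=
  ∫ α in ((2:ℝ)^ℓ / N)..((2:ℝ)^(ℓ+1) / N),
    ‖∑ k ∈ Finset.range (K α), e ((j : ℝ) * ((k : ℝ) * α))‖ ^ 2

open Real intervalIntegral


lemma norm_e (x : ℝ) : ‖e x‖ = 1 := by
  unfold e
  rw [show 2 * (Real.pi:ℂ) * Complex.I * x = (2 * Real.pi * x : ℝ) * Complex.I by push_cast; ring]
  exact Complex.norm_exp_ofReal_mul_I _

lemma e_pow (x : ℝ) (k : ℕ) : e ((k:ℝ) * x) = e x ^ k := by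
  unfold e
  rw [← Complex.exp_nat_mul]
  congr 1
  push_cast
  ring

lemma norm_e_sub_one (x : ℝ) : ‖e x - 1‖ = 2 * |Real.sin (π * x)| := by
  have e1 : Complex.exp ((π * x:ℝ) * Complex.I) * Complex.exp ((π * x:ℝ) * Complex.I)
      = Complex.exp (2 * (π:ℂ) * Complex.I * x) := by
    rw [← Complex.exp_add]; push_cast; ring_nf
  have e2 : Complex.exp ((π * x:ℝ) * Complex.I) * Complex.exp (-(π * x:ℝ) * Complex.I) = 1 := by
    rw [← Complex.exp_add]
    rw [show ((π * x:ℝ):ℂ) * Complex.I + -(π * x:ℝ) * Complex.I = 0 by ring, Complex.exp_zero]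
  have h1 : e x - 1 = Complex.exp ((π * x : ℝ) * Complex.I) *
      (2 * Complex.I * Complex.sin ((π * x : ℝ) : ℂ)) := by
    rw [Complex.sin]
    unfold e
    linear_combination (Complex.I^2) * e1 - (Complex.I^2) * e2 +
      (Complex.exp (2*(π:ℂ)*Complex.I*x) - 1) * Complex.I_sq
  rw [h1, norm_mul, Complex.norm_exp_ofReal_mul_I, one_mul,
    ← Complex.ofReal_sin, norm_mul, norm_mul, Complex.norm_real, Complex.norm_I, Real.norm_eq_abs]
  norm_num


lemma key_identity (j : ℤ) (α : ℝ) (n : ℕ) :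
    ‖∑ k ∈ Finset.range n, e ((j:ℝ) * ((k:ℝ) * α))‖ * (2 * |Real.sin (π * ((j:ℝ) * α))|)
      = 2 * |Real.sin (π * ((j:ℝ) * ((n:ℝ) * α)))| := by
  have hterm : ∀ k ∈ Finset.range n, e ((j:ℝ) * ((k:ℝ) * α)) = e ((j:ℝ) * α) ^ k := by
    intro k _
    rw [← e_pow]
    congr 1
    ring
  rw [Finset.sum_congr rfl hterm, ← norm_e_sub_one, ← norm_mul, geom_sum_mul,
    show (j:ℝ) * ((n:ℝ) * α) = (n:ℝ) * ((j:ℝ) * α) from by ring, ← e_pow, norm_e_sub_one]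

lemma norm_sum_e_le (j : ℤ) (α : ℝ) (n : ℕ) :
    ‖∑ k ∈ Finset.range n, e ((j:ℝ) * ((k:ℝ) * α))‖ ≤ (n:ℝ) := by
  calc ‖∑ k ∈ Finset.range n, e ((j:ℝ) * ((k:ℝ) * α))‖
      ≤ ∑ k ∈ Finset.range n, ‖e ((j:ℝ) * ((k:ℝ) * α))‖ := norm_sum_le _ _
    _ = (n:ℝ) := by simp [norm_e]

lemma K_mul_ge {α : ℝ} (h0 : 0 < α) : 1 ≤ (K α : ℝ) * α := by
  unfold K
  rw [← div_le_iff₀ h0]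
  exact Nat.le_ceil _

lemma K_mul_lt {α : ℝ} (h0 : 0 < α) : (K α : ℝ) * α < 1 + α := by
  have h : (⌈1/α⌉₊ : ℝ) < 1/α + 1 := Nat.ceil_lt_add_one (by positivity)
  have := mul_lt_mul_of_pos_right h h0
  unfold K
  calc (⌈1/α⌉₊:ℝ) * α < (1/α + 1) * α := this
    _ = 1 + α := by field_simp

lemma K_le {α : ℝ} (h0 : 0 < α) (h1 : α ≤ 1) : (K α : ℝ) ≤ 2 / α := by
  have h : (⌈1/α⌉₊ : ℝ) < 1/α + 1 := Nat.ceil_lt_add_one (by positivity)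
  have h2 : 1 ≤ 1/α := by rw [le_div_iff₀ h0]; linarith
  unfold K
  have : (1:ℝ)/α + 1 ≤ 2/α := by linarith [show (1:ℝ)/α + 1/α = 2/α from by ring]
  linarith

lemma sin_K_bound (j : ℤ) {α : ℝ} (h0 : 0 < α) (h1 : α ≤ 1) :
    |Real.sin (π * ((j:ℝ) * ((K α : ℝ) * α)))| ≤ π * |(j:ℝ)| * α := by
  set δ : ℝ := (K α : ℝ) * α - 1 with hδ
  have hδ0 : 0 ≤ δ := by have := K_mul_ge h0; simp [hδ]; linarith
  have hδ1 : δ ≤ α := by have := K_mul_lt h0; simp [hδ]; linarith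
  have harg : π * ((j:ℝ) * ((K α : ℝ) * α)) = π * ((j:ℝ) * δ) + (j:ℤ) * π := by
    push_cast
    simp [hδ]
    ring
  have hone : |(-1:ℝ) ^ j| = 1 := by
    rcases Int.even_or_odd j with he | ho
    · rw [he.neg_one_zpow, abs_one]
    · rw [ho.neg_one_zpow, abs_neg, abs_one]
  rw [harg, Real.sin_add_int_mul_pi, abs_mul, hone, one_mul]
  calc |Real.sin (π * ((j:ℝ) * δ))| ≤ |π * ((j:ℝ) * δ)| := Real.abs_sin_le_abs
    _ = π * |(j:ℝ)| * δ := by rw [abs_mul, abs_mul, abs_of_pos Real.pi_pos, abs_of_nonneg hδ0]; ring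
    _ ≤ π * |(j:ℝ)| * α := by
        apply mul_le_mul_of_nonneg_left hδ1
        positivity

lemma case2_pointwise (j : ℤ) (hj : j ≠ 0) {α : ℝ} (h0 : 0 < α) (h1 : α ≤ 1)
    (hsmall : |(j:ℝ)| * α < 1/2) :
    ‖∑ k ∈ Finset.range (K α), e ((j:ℝ) * ((k:ℝ) * α))‖ ≤ π / 2 := by
  have hjabs : (1:ℝ) ≤ |(j:ℝ)| := by
    rw [← Int.cast_abs]
    exact_mod_cast Int.one_le_abs hj
  have hkey := key_identity j α (K α)
  have hnum := sin_K_bound j h0 h1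
  have hsin : 2 * (|(j:ℝ)| * α) ≤ |Real.sin (π * ((j:ℝ) * α))| := by
    have habs : |π * ((j:ℝ) * α)| = π * (|(j:ℝ)| * α) := by
      rw [abs_mul, abs_mul, abs_of_pos Real.pi_pos, abs_of_pos h0]
    have hle : |π * ((j:ℝ) * α)| ≤ π / 2 := by
      rw [habs]
      calc π * (|(j:ℝ)| * α) ≤ π * (1/2) := by
            apply mul_le_mul_of_nonneg_left hsmall.le Real.pi_pos.le
        _ = π / 2 := by ring
    have := Real.mul_abs_le_abs_sin hle
    rw [habs] at this
    calc 2 * (|(j:ℝ)| * α) = 2/π * (π * (|(j:ℝ)| * α)) := by field_simp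
      _ ≤ _ := this
  set S := ‖∑ k ∈ Finset.range (K α), e ((j:ℝ) * ((k:ℝ) * α))‖ with hS
  have hS0 : 0 ≤ S := norm_nonneg _
  have hja : 0 < |(j:ℝ)| * α := by positivity
  have h2 : S * (2 * (2 * (|(j:ℝ)| * α))) ≤ S * (2 * |Real.sin (π * ((j:ℝ) * α))|) := by
    apply mul_le_mul_of_nonneg_left _ hS0
    linarith
  rw [hkey] at h2
  have h4 : 0 < 4 * (|(j:ℝ)| * α) := by positivity
  apply (mul_le_mul_iff_of_pos_right h4).mp
  calc S * (4 * (|(j:ℝ)| * α)) = S * (2 * (2 * (|(j:ℝ)| * α))) := by ring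
    _ ≤ 2 * (π * |(j:ℝ)| * α) := by linarith
    _ = π / 2 * (4 * (|(j:ℝ)| * α)) := by ring


lemma h_cont (C : ℝ) : Continuous (fun β : ℝ => 2*C^2/(1+C^2*Real.sin (π*β)^2)) := by
  apply Continuous.div continuous_const (by fun_prop)
  intro x
  positivity

lemma h_nonneg (C : ℝ) (β : ℝ) : 0 ≤ 2*C^2/(1+C^2*Real.sin (π*β)^2) := by positivity

lemma h_le (C : ℝ) (β : ℝ) : 2*C^2/(1+C^2*Real.sin (π*β)^2) ≤ 2*C^2 := by
  apply div_le_self (by positivity)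
  nlinarith [sq_nonneg (C * Real.sin (π*β))]

lemma h_symm (C : ℝ) (β : ℝ) :
    2*C^2/(1+C^2*Real.sin (π*(1-β))^2) = 2*C^2/(1+C^2*Real.sin (π*β)^2) := by
  rw [show π*(1-β) = π - π*β by ring, Real.sin_pi_sub]

lemma integral_mid (C : ℝ) (hC : 4 ≤ C) :
    ∫ β in (C⁻¹:ℝ)..(1/2), 2*C^2/(1+C^2*Real.sin (π*β)^2) ≤ C/2 := by
  have hCpos : (0:ℝ) < C := by linarith
  have ht0 : (0:ℝ) < C⁻¹ := by positivity
  have ht1 : (C⁻¹:ℝ) ≤ 1/4 := by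
    rw [inv_le_comm₀ hCpos (by norm_num)]
    norm_num
    linarith
  have hmono : ∀ x ∈ Set.Icc (C⁻¹:ℝ) (1/2), 2*C^2/(1+C^2*Real.sin (π*x)^2) ≤ (1/2) * x^(-2:ℤ) := by
    intro x hx
    obtain ⟨hx0, hx1⟩ := hx
    have hxpos : 0 < x := lt_of_lt_of_le ht0 hx0
    have hsin : 2 * x ≤ Real.sin (π * x) := by
      have := Real.mul_le_sin (x := π * x) (by positivity) (by nlinarith [Real.pi_pos])
      calc 2 * x = 2/π * (π * x) := by field_simp
        _ ≤ _ := this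
    have hs2 : 4 * x^2 ≤ Real.sin (π*x)^2 := by nlinarith
    calc 2*C^2/(1+C^2*Real.sin (π*x)^2) ≤ 2*C^2/(C^2*(4*x^2)) := by
          apply div_le_div_of_nonneg_left (by positivity) (by positivity)
          nlinarith [sq_nonneg C]
      _ = (1/2) * x^(-2:ℤ) := by
          rw [zpow_neg, zpow_two]
          field_simp
          ring
  calc ∫ β in (C⁻¹:ℝ)..(1/2), 2*C^2/(1+C^2*Real.sin (π*β)^2)
      ≤ ∫ β in (C⁻¹:ℝ)..(1/2), (1/2) * β^(-2:ℤ) := by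
        apply integral_mono_on (by linarith) ((h_cont C).intervalIntegrable _ _) _ hmono
        apply IntervalIntegrable.const_mul
        apply intervalIntegral.intervalIntegrable_zpow
        right
        intro hmem
        rw [Set.mem_uIcc] at hmem
        rcases hmem with ⟨h1, _⟩ | ⟨_, h2⟩ <;> linarith
    _ = (1/2) * ((1/2:ℝ)^(-2+1:ℤ) - (C⁻¹)^(-2+1:ℤ))/(-2+1:ℤ) := by
        rw [intervalIntegral.integral_const_mul, integral_zpow]
        · push_cast
          ring
        · right
          constructor
          · norm_num
          · intro hmem
            rw [Set.mem_uIcc] at hmem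
            rcases hmem with ⟨h1, _⟩ | ⟨_, h2⟩ <;> linarith
    _ = (C - 2)/2 := by
        norm_num
        ring
    _ ≤ C/2 := by linarith

lemma integral_edge (C : ℝ) (hC : 4 ≤ C) {u v : ℝ} (huv : u ≤ v) (hlen : v - u ≤ C⁻¹) :
    ∫ β in u..v, 2*C^2/(1+C^2*Real.sin (π*β)^2) ≤ 2*C := by
  have hCpos : (0:ℝ) < C := by linarith
  calc ∫ β in u..v, 2*C^2/(1+C^2*Real.sin (π*β)^2)
      ≤ ∫ _ in u..v, 2*C^2 := by
        apply integral_mono_on huv ((h_cont C).intervalIntegrable _ _)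
          intervalIntegrable_const
        intro x _
        exact h_le C x
    _ = (v - u) * (2*C^2) := by rw [intervalIntegral.integral_const]; simp
    _ ≤ C⁻¹ * (2*C^2) := by
        apply mul_le_mul_of_nonneg_right hlen (by positivity)
    _ = 2*C := by field_simp

lemma integral_aux (C : ℝ) (hC : 4 ≤ C) :
    ∫ β in (0:ℝ)..1, 2*C^2/(1+C^2*Real.sin (π*β)^2) ≤ 5*C := by
  have hCpos : (0:ℝ) < C := by linarith
  have ht0 : (0:ℝ) < C⁻¹ := by positivity
  have ht1 : (C⁻¹:ℝ) ≤ 1/4 := by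
    rw [inv_le_comm₀ hCpos (by norm_num)]
    norm_num
    linarith
  set h : ℝ → ℝ := fun β => 2*C^2/(1+C^2*Real.sin (π*β)^2) with hh
  have hint : ∀ u v : ℝ, IntervalIntegrable h volume u v :=
    fun u v => (h_cont C).intervalIntegrable u v
  have split1 : ∫ β in (0:ℝ)..1, h β = (∫ β in (0:ℝ)..C⁻¹, h β) + (∫ β in (C⁻¹:ℝ)..(1/2), h β)
      + (∫ β in (1/2:ℝ)..(1-C⁻¹), h β) + (∫ β in (1-C⁻¹:ℝ)..1, h β) := by
    rw [integral_add_adjacent_intervals (hint 0 C⁻¹) (hint C⁻¹ (1/2)),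
      integral_add_adjacent_intervals (hint 0 (1/2)) (hint (1/2) (1-C⁻¹)),
      integral_add_adjacent_intervals (hint 0 (1-C⁻¹)) (hint (1-C⁻¹) 1)]
  have hrefl : (∫ β in (1/2:ℝ)..(1-C⁻¹), h β) = ∫ β in (C⁻¹:ℝ)..(1/2), h β := by
    have : (∫ β in (1/2:ℝ)..(1-C⁻¹), h β) = ∫ β in (1/2:ℝ)..(1-C⁻¹), h (1 - β) := by
      apply intervalIntegral.integral_congr
      intro x _
      rw [hh]
      exact (h_symm C x).symm
    rw [this, intervalIntegral.integral_comp_sub_left h 1]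
    norm_num
  rw [split1, hrefl]
  have e1 : (∫ β in (0:ℝ)..C⁻¹, h β) ≤ 2*C := integral_edge C hC (by linarith) (by linarith)
  have e2 : (∫ β in (C⁻¹:ℝ)..(1/2), h β) ≤ C/2 := integral_mid C hC
  have e4 : (∫ β in (1-C⁻¹:ℝ)..1, h β) ≤ 2*C := integral_edge C hC (by linarith) (by linarith)
  linarith


set_option maxHeartbeats 2000000 in
/-- For every nonzero integer `j`, `E(j; N) ≤ 2^(ℓ+8)`. -/
theorem E_bound (ℓ N : ℕ) (hN : 2 ^ (ℓ + 1) ≤ N) (j : ℤ) (hj : j ≠ 0) :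
    E ℓ N j ≤ 2 ^ (ℓ + 8) := by
  have hN0 : (0:ℝ) < N := by
    have : 0 < N := lt_of_lt_of_le (Nat.pow_pos (by norm_num : (0:ℕ) < 2)) hN
    exact_mod_cast this
  set a : ℝ := (2:ℝ)^ℓ / N with ha_def
  have ha : 0 < a := by positivity
  have hb : (2:ℝ)^(ℓ+1)/(N:ℝ) = 2*a := by rw [pow_succ]; ring
  have h2a1 : 2*a ≤ 1 := by
    rw [ha_def, ← hb, div_le_one hN0]
    calc ((2:ℝ)^(ℓ+1)) = ((2^(ℓ+1) : ℕ) : ℝ) := by push_cast; ring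
      _ ≤ N := by exact_mod_cast hN
  have hpow : (256:ℝ) ≤ 2^(ℓ+8) := by
    calc (256:ℝ) = 2^8 := by norm_num
      _ ≤ 2^(ℓ+8) := by
        apply pow_le_pow_right₀ (by norm_num)
        omega
  unfold E
  rw [hb]
  set f : ℝ → ℝ := fun α => ‖∑ k ∈ Finset.range (K α), e ((j:ℝ)*((k:ℝ)*α))‖^2 with hf
  by_cases hInt : IntervalIntegrable f volume a (2*a)
  swap
  · rw [intervalIntegral.integral_undef hInt]
    positivity
  set m : ℕ := j.natAbs with hm_def
  have hm1 : (1:ℝ) ≤ (m:ℝ) := by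
    have : 1 ≤ m := Int.natAbs_pos.mpr hj
    exact_mod_cast this
  have habsj : |(j:ℝ)| = (m:ℝ) := by
    rw [hm_def, Nat.cast_natAbs]
    push_cast
    rfl
  suffices hE : (∫ α in a..2*a, f α) ≤ 256 by linarith
  by_cases hcase : (m:ℝ) * a < 1/4
  · -- small case: pointwise bound by 4
    have hpt : ∀ α ∈ Set.Icc a (2*a), f α ≤ 4 := by
      rintro α ⟨hα1, hα2⟩
      have h0 : 0 < α := lt_of_lt_of_le ha hα1
      have h1 : α ≤ 1 := le_trans hα2 (by linarith)
      have hsm : |(j:ℝ)| * α < 1/2 := by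
        rw [habsj]
        calc (m:ℝ) * α ≤ (m:ℝ) * (2*a) := by
              apply mul_le_mul_of_nonneg_left hα2 (by linarith)
          _ = 2 * ((m:ℝ)*a) := by ring
          _ < 1/2 := by linarith
      have hS := case2_pointwise j hj h0 h1 hsm
      have hS0 : (0:ℝ) ≤ ‖∑ k ∈ Finset.range (K α), e ((j:ℝ)*((k:ℝ)*α))‖ := norm_nonneg _
      have hpi : π / 2 ≤ 2 := by linarith [Real.pi_le_four]
      calc f α = ‖∑ k ∈ Finset.range (K α), e ((j:ℝ)*((k:ℝ)*α))‖^2 := rfl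
        _ ≤ 2^2 := by
            apply pow_le_pow_left₀ hS0 (le_trans hS hpi)
        _ = 4 := by norm_num
    calc (∫ α in a..2*a, f α) ≤ ∫ _ in a..2*a, (4:ℝ) := by
          apply integral_mono_on (by linarith) hInt intervalIntegrable_const hpt
      _ = (2*a - a) * 4 := by rw [intervalIntegral.integral_const]; simp
      _ ≤ 4 := by linarith
      _ ≤ 256 := by norm_num
  · push_neg at hcase
    set C : ℝ := 2/a with hC_def
    have hC4 : 4 ≤ C := by
      rw [hC_def, le_div_iff₀ ha]
      linarith
    have hCpos : 0 < C := by linarith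
    set h : ℝ → ℝ := fun β => 2*C^2/(1+C^2*Real.sin (π*β)^2) with hh
    have hm0 : ((m:ℝ)) ≠ 0 := by linarith
    -- pointwise bound
    have hpt : ∀ α ∈ Set.Icc a (2*a), f α ≤ h ((m:ℝ)*α) := by
      rintro α ⟨hα1, hα2⟩
      have h0 : 0 < α := lt_of_lt_of_le ha hα1
      have h1 : α ≤ 1 := le_trans hα2 (by linarith)
      set S := ‖∑ k ∈ Finset.range (K α), e ((j:ℝ)*((k:ℝ)*α))‖ with hSdef
      have hS0 : 0 ≤ S := norm_nonneg _
      have hSC : S ≤ C := by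
        calc S ≤ (K α : ℝ) := norm_sum_e_le j α (K α)
          _ ≤ 2/α := K_le h0 h1
          _ ≤ 2/a := div_le_div_of_nonneg_left (by norm_num) ha hα1
      have hsin_eq : |Real.sin (π * ((j:ℝ)*α))| = |Real.sin (π * ((m:ℝ)*α))| := by
        rcases abs_choice ((j:ℝ)) with hc | hc
        · rw [← hc, habsj]
        · rw [show (m:ℝ) = -(j:ℝ) by rw [← habsj, ← hc],
            show π * (-(j:ℝ)*α) = -(π * ((j:ℝ)*α)) by ring, Real.sin_neg, abs_neg]
      have hSsin : S * |Real.sin (π * ((m:ℝ)*α))| ≤ 1 := by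
        have hkey := key_identity j α (K α)
        rw [hsin_eq] at hkey
        have hb1 : |Real.sin (π * ((j:ℝ) * ((K α:ℝ) * α)))| ≤ 1 :=
          abs_le.mpr ⟨Real.neg_one_le_sin _, Real.sin_le_one _⟩
        nlinarith [abs_nonneg (Real.sin (π * ((m:ℝ)*α)))]
      -- conclude f α ≤ h (m α)
      show S^2 ≤ 2*C^2/(1+C^2*Real.sin (π*((m:ℝ)*α))^2)
      rw [le_div_iff₀ (by positivity)]
      have hsq : (S * |Real.sin (π * ((m:ℝ)*α))|)^2 ≤ 1 := by
        nlinarith [mul_nonneg hS0 (abs_nonneg (Real.sin (π * ((m:ℝ)*α))))]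
      have hexp : (S * |Real.sin (π * ((m:ℝ)*α))|)^2
          = S^2 * Real.sin (π*((m:ℝ)*α))^2 := by
        rw [mul_pow, sq_abs]
      nlinarith [sq_nonneg S, sq_nonneg C]
    -- integral chain
    have hcont_hm : Continuous (fun α : ℝ => h ((m:ℝ)*α)) :=
      (h_cont C).comp (continuous_const.mul continuous_id)
    have step1 : (∫ α in a..2*a, f α) ≤ ∫ α in a..2*a, h ((m:ℝ)*α) :=
      integral_mono_on (by linarith) hInt (hcont_hm.intervalIntegrable _ _) hpt
    have step2 : (∫ α in a..2*a, h ((m:ℝ)*α)) = ((m:ℝ))⁻¹ • ∫ β in (m:ℝ)*a..(m:ℝ)*(2*a), h β :=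
      intervalIntegral.integral_comp_mul_left h hm0
    set t1 : ℤ := ⌊(m:ℝ)*a⌋ with ht1_def
    set p : ℤ := ⌈(m:ℝ)*(2*a)⌉ - t1 with hp_def
    have ht1a : (t1:ℝ) ≤ (m:ℝ)*a := Int.floor_le _
    have ht1b : (m:ℝ)*a - 1 < (t1:ℝ) := Int.sub_one_lt_floor _
    have hpa : (m:ℝ)*(2*a) ≤ (t1:ℝ) + (p:ℤ) := by
      push_cast [hp_def]
      linarith [Int.le_ceil ((m:ℝ)*(2*a))]
    have hpb : ((p:ℤ):ℝ) ≤ (m:ℝ)*a + 2 := by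
      push_cast [hp_def]
      linarith [Int.ceil_lt_add_one ((m:ℝ)*(2*a))]
    have hinth : ∀ u v : ℝ, IntervalIntegrable h volume u v :=
      fun u v => (h_cont C).intervalIntegrable u v
    have hma2 : (m:ℝ)*a ≤ (m:ℝ)*(2*a) := by nlinarith
    have step3 : (∫ β in (m:ℝ)*a..(m:ℝ)*(2*a), h β) ≤ ∫ β in (t1:ℝ)..((t1:ℝ)+(p:ℤ)), h β := by
      have split : (∫ β in (t1:ℝ)..((t1:ℝ)+(p:ℤ)), h β)
          = (∫ β in (t1:ℝ)..((m:ℝ)*a), h β) + (∫ β in (m:ℝ)*a..(m:ℝ)*(2*a), h β)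
            + ∫ β in (m:ℝ)*(2*a)..((t1:ℝ)+(p:ℤ)), h β := by
        rw [integral_add_adjacent_intervals (hinth _ _) (hinth _ _),
          integral_add_adjacent_intervals (hinth _ _) (hinth _ _)]
      have n1 : 0 ≤ ∫ β in (t1:ℝ)..((m:ℝ)*a), h β :=
        intervalIntegral.integral_nonneg ht1a (fun x _ => h_nonneg C x)
      have n2 : 0 ≤ ∫ β in (m:ℝ)*(2*a)..((t1:ℝ)+(p:ℤ)), h β :=
        intervalIntegral.integral_nonneg hpa (fun x _ => h_nonneg C x)
      linarith [split]
    have hper : Function.Periodic h 1 := by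
      intro x
      show 2*C^2/(1+C^2*Real.sin (π*(x+1))^2) = 2*C^2/(1+C^2*Real.sin (π*x)^2)
      rw [show π*(x+1) = π*x + π by ring, Real.sin_add_pi]
      ring_nf
    have step4 : (∫ β in (t1:ℝ)..((t1:ℝ)+(p:ℤ)), h β) = (p:ℤ) • ∫ β in (0:ℝ)..1, h β := by
      have e1 := hper.intervalIntegral_add_zsmul_eq p (t1:ℝ) hinth
      have e2 := hper.intervalIntegral_add_eq (t1:ℝ) 0
      have hc : (t1:ℝ) + ((p:ℤ):ℝ) = (t1:ℝ) + p • (1:ℝ) := by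
        rw [zsmul_eq_mul, mul_one]
      rw [hc, e1, e2]
      norm_num
    have h01 : 0 ≤ ∫ β in (0:ℝ)..1, h β :=
      intervalIntegral.integral_nonneg (by norm_num) (fun x _ => h_nonneg C x)
    have haux : (∫ β in (0:ℝ)..1, h β) ≤ 5*C := integral_aux C hC4
    have hp9 : ((p:ℤ):ℝ) ≤ 9 * ((m:ℝ)*a) := by linarith
    have hp0 : (0:ℝ) ≤ ((p:ℤ):ℝ) := by linarith [hcase]
    calc (∫ α in a..2*a, f α) ≤ ∫ α in a..2*a, h ((m:ℝ)*α) := step1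
      _ = ((m:ℝ))⁻¹ • ∫ β in (m:ℝ)*a..(m:ℝ)*(2*a), h β := step2
      _ = ((m:ℝ))⁻¹ * ∫ β in (m:ℝ)*a..(m:ℝ)*(2*a), h β := smul_eq_mul _ _
      _ ≤ ((m:ℝ))⁻¹ * ((p:ℤ) • ∫ β in (0:ℝ)..1, h β) := by
          apply mul_le_mul_of_nonneg_left _ (by positivity)
          rw [← step4]
          exact step3
      _ = ((m:ℝ))⁻¹ * (((p:ℤ):ℝ) * ∫ β in (0:ℝ)..1, h β) := by
          rw [zsmul_eq_mul]
      _ ≤ ((m:ℝ))⁻¹ * ((9 * ((m:ℝ)*a)) * (5*C)) := by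
          apply mul_le_mul_of_nonneg_left _ (by positivity)
          apply mul_le_mul hp9 haux h01 (by positivity)
      _ = 90 := by
          have hane : a ≠ 0 := ne_of_gt ha
          rw [hC_def]
          have hrw : ((m:ℝ))⁻¹ * ((9 * ((m:ℝ)*a)) * (5*(2/a))) = 90 * (((m:ℝ))⁻¹ * (m:ℝ)) * (a / a) := by
            ring
          rw [hrw, inv_mul_cancel₀ hm0, div_self hane, mul_one, mul_one]
      _ ≤ 256 := by norm_num
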